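/- Let A = 𝔽((Y))⟨(Y_1/Y)^{±1},…,(Y_{f-1}/Y)^{±1}⟩ (a Banach algebra over a finite field 𝔽 of Laurent series in Y with restricted power series in invertible variables), with v the Y-adic valuation, and let φ_q be an injective 𝔽-algebra endomorphism with v(φ_q(a)) = q·v(a) for all a, where q > 1. Let M = A·e be a free A-module of rank 1 with φ_q(e) = λe for some λ ∈ A° with v(λ) = r ≥ 0. Then any element x = t·e with v(t) ≤ −r−1 does NOT lie in any finitely generated φ_q-stable A°-submodule of M; equivalently, the A°-module ∑_{i≥0} A° φ_q^i(x) is not finitely generated. -/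

import Mathlib

/-- Let `A` be a domain with an additive valuation `v` (written additively,
`v 0 = ⊤`), `φ_q` an injective endomorphism with `v (φ_q a) = q · v a` for some `q > 1`, and
`A° = S = {a : 0 ≤ v a}` the (Noetherian) ring of power-bounded elements.  Let `M = A·e` be
free of rank one with `φ_M(a·e) = φ_q(a)·λ·e` where `v λ = r ≥ 0` (identifying `M = A`, so
`φ_M x = φ_q x · λ`).  Then any `x = t·e` with `v t ≤ −r−1` does not lie in any finitely
generated `φ_M`-stable `A°`-submodule of `M`; equivalently, `∑_{i≥0} A°·φ_M^i(x)` is not a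
finitely generated `A°`-module. -/
theorem statement_4 {A : Type*} [CommRing A] [IsDomain A]
    (v : AddValuation A (WithTop ℤ))
    (φq : A →+* A) (hφinj : Function.Injective φq)
    (q : ℕ) (hq : 1 < q) (hv : ∀ a : A, v (φq a) = q • v a)
    (S : Subring A) (hS : ∀ x : A, x ∈ S ↔ 0 ≤ v x) [IsNoetherianRing ↥S]
    (lam : A) (r : ℤ) (hr : 0 ≤ r) (hlam : v lam = (r : WithTop ℤ))
    (t : A) (ht : v t ≤ ((-r - 1 : ℤ) : WithTop ℤ))
    (φM : A → A) (hφM : ∀ x : A, φM x = φq x * lam) :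
    (∀ N : Submodule ↥S A, (∀ y ∈ N, φM y ∈ N) → N.FG → t ∉ N) ∧
    ¬ (Submodule.span ↥S (Set.range fun i : ℕ => φM^[i] t)).FG := by
  classical
  -- key step : valuation of φM x
  have keystep : ∀ (x : A) (c : ℤ), c ≤ -r - 1 → v x ≤ (c : WithTop ℤ) →
      v (φM x) ≤ ((c - 1 : ℤ) : WithTop ℤ) := by
    intro x c hc hx
    obtain ⟨a, hva, hac⟩ := WithTop.le_coe_iff.mp hx
    have : v (φM x) = ((q • a + r : ℤ) : WithTop ℤ) := by
      rw [hφM, v.map_mul, hv, hlam, hva]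
      push_cast
      rfl
    rw [this]
    have hq' : (2 : ℤ) ≤ (q : ℤ) := by exact_mod_cast hq
    have : q • a + r ≤ c - 1 := by
      have h1 : (q : ℤ) * a ≤ (q : ℤ) * c :=
        mul_le_mul_of_nonneg_left hac (by positivity)
      have hsm : q • a = (q : ℤ) * a := nsmul_eq_mul q a
      rw [hsm]
      nlinarith [mul_le_mul_of_nonneg_left hc (by linarith : (0:ℤ) ≤ (q:ℤ) - 1)]
    exact_mod_cast this
  -- valuation of iterates
  have hiter : ∀ i : ℕ, v (φM^[i] t) ≤ ((-r - 1 - i : ℤ) : WithTop ℤ) := by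
    intro i
    induction i with
    | zero => simpa using ht
    | succ n ih =>
        rw [Function.iterate_succ_apply']
        have := keystep (φM^[n] t) (-r - 1 - n) (by linarith [Int.ofNat_nonneg n]) ih
        refine this.trans ?_
        have : (-r - 1 - (n:ℤ)) - 1 ≤ -r - 1 - ((n+1 : ℕ) : ℤ) := by push_cast; linarith
        exact_mod_cast this
  -- a lower bound for valuations on a f.g. submodule
  have hbound : ∀ N : Submodule ↥S A, N.FG → ∃ B : ℤ, ∀ y ∈ N, (B : WithTop ℤ) ≤ v y := by
    intro N hN
    obtain ⟨T, hT⟩ := hN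
    have hgen : ∀ T : Finset A, ∃ B : ℤ, ∀ g ∈ (T : Set A), (B : WithTop ℤ) ≤ v g := by
      intro T
      induction T using Finset.induction with
      | empty => exact ⟨0, by simp⟩
      | @insert a T' ha ih =>
          obtain ⟨B, hB⟩ := ih
          rcases eq_or_ne (v a) ⊤ with hva | hva
          · exact ⟨B, by
              intro g hg
              rcases Finset.mem_insert.mp hg with rfl | hg
              · simp [hva]
              · exact hB g hg⟩
          · obtain ⟨b, hb⟩ := WithTop.ne_top_iff_exists.mp hva
            refine ⟨min B b, ?_⟩
            intro g hg
            rcases Finset.mem_insert.mp hg with rfl | hg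
            · rw [← hb]; exact_mod_cast min_le_right B b
            · exact le_trans (by exact_mod_cast min_le_left B b) (hB g hg)
    obtain ⟨B, hB⟩ := hgen T
    refine ⟨B, ?_⟩
    intro y hy
    rw [← hT] at hy
    induction hy using Submodule.span_induction with
    | mem g hg => exact hB g hg
    | zero => rw [v.map_zero]; exact le_top
    | add x y _ _ hx hy => exact v.map_le_add hx hy
    | smul s x _ hx =>
        have : (s : A) • x = (s : A) * x := rfl
        have hvs : (0 : WithTop ℤ) ≤ v (s : A) := (hS _).mp s.2
        calc (B : WithTop ℤ) ≤ v x := hx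
          _ = 0 + v x := by rw [zero_add]
          _ ≤ v (s : A) + v x := by exact add_le_add hvs le_rfl
          _ = v ((s : A) * x) := (v.map_mul _ _).symm
          _ = v ((s : A) • x) := rfl
  -- part 1
  have part1 : ∀ N : Submodule ↥S A, (∀ y ∈ N, φM y ∈ N) → N.FG → t ∉ N := by
    intro N hstab hN htN
    obtain ⟨B, hB⟩ := hbound N hN
    have hmem : ∀ i : ℕ, φM^[i] t ∈ N := by
      intro i
      induction i with
      | zero => simpa using htN
      | succ n ih => rw [Function.iterate_succ_apply']; exact hstab _ ih
    set i : ℕ := (-r - B).toNat with hi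
    have hlt : (-r - 1 - (i : ℤ)) < B := by
      have := Int.self_le_toNat (-r - B)
      omega
    have h1 := hiter i
    have h2 := hB _ (hmem i)
    have : (B : WithTop ℤ) ≤ ((-r - 1 - (i : ℤ)) : WithTop ℤ) := le_trans h2 h1
    have : B ≤ -r - 1 - (i : ℤ) := by exact_mod_cast this
    omega
  refine ⟨part1, ?_⟩
  intro hFG
  set N := Submodule.span ↥S (Set.range fun i : ℕ => φM^[i] t) with hNdef
  have hstab : ∀ y ∈ N, φM y ∈ N := by
    intro y hy
    induction hy using Submodule.span_induction with
    | mem g hg =>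
        obtain ⟨i, rfl⟩ := hg
        have : φM (φM^[i] t) = φM^[i+1] t := (Function.iterate_succ_apply' φM i t).symm
        rw [this]
        exact Submodule.subset_span ⟨i + 1, rfl⟩
    | zero =>
        have : φM 0 = 0 := by rw [hφM]; simp
        rw [this]; exact N.zero_mem
    | add x y _ _ hx hy =>
        have : φM (x + y) = φM x + φM y := by rw [hφM, hφM, hφM, map_add, add_mul]
        rw [this]; exact N.add_mem hx hy
    | smul s x _ hx =>
        have hsm : φM ((s : A) • x) = φq (s : A) * φM x := by
          rw [hφM, hφM]
          show φq ((s:A) * x) * lam = _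
          rw [map_mul, mul_assoc]
        have hmemS : φq (s : A) ∈ S := by
          rw [hS, hv]
          exact nsmul_nonneg ((hS _).mp s.2) q
        have : (s : ↥S) • x = (s : A) • x := rfl
        rw [this, hsm]
        exact N.smul_mem ⟨φq (s : A), hmemS⟩ hx
  have htN : t ∈ N := Submodule.subset_span ⟨0, rfl⟩
  exact part1 N hstab hFG htN
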